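/- Let f₁, f₂ : S¹ → S¹ be continuous maps with degrees d₁ and d₂. If d₁ ≠ d₂, then any maps homotopic to f₁ and f₂ have at least |d₁ - d₂| coincidence points; moreover this bound is attained, i.e. the minimal number of coincidence points over all pairs homotopic to (f₁, f₂) equals |d₁ - d₂|. -/

import Mathlib

noncomputable section CircleDegreeTheory

open Real Set Complex



lemma circle_mem_slitPlane {z : Circle} (h : (z : ℂ) ≠ -1) : (z : ℂ) ∈ slitPlane := by
  rw [Complex.mem_slitPlane_iff]
  by_contra hc
  push_neg at hc
  obtain ⟨h1, h2⟩ := hc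
  have hn : Complex.normSq z = 1 := Circle.normSq_coe z
  rw [Complex.normSq_apply, h2] at hn
  have : (z : ℂ).re = -1 := by nlinarith
  exact h (by apply Complex.ext <;> simp [this, h2])

lemma circle_ne_neg {z w : Circle} (h : dist z w < 2) : (z : ℂ) ≠ -(w : ℂ) := by
  intro he
  change dist (z:ℂ) (w:ℂ) < 2 at h
  rw [Complex.dist_eq, he] at h
  have : ‖(-(w:ℂ) - w)‖ = 2 := by
    have : -(w:ℂ) - w = -(2 * w) := by ring
    rw [this, norm_neg, norm_mul]
    simp [Circle.norm_coe]
  linarith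

def IsLift (g : Circle → Circle) (ψ : ℝ → ℝ) : Prop :=
  ContinuousOn ψ (Icc 0 (2 * π)) ∧ ∀ t ∈ Icc 0 (2 * π), Circle.exp (ψ t) = g (Circle.exp t)

lemma continuousOn_arg_comp {q : ℝ → Circle} {s : Set ℝ} (hq : ContinuousOn q s)
    (hne : ∀ t ∈ s, ((q t : ℂ) ≠ -1)) :
    ContinuousOn (fun t => Complex.arg (q t)) s := by
  intro t ht
  have h1 : ContinuousWithinAt (fun t => (q t : ℂ)) s t :=
    continuous_subtype_val.continuousAt.comp_continuousWithinAt (hq t ht)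
  show ContinuousWithinAt (Complex.arg ∘ fun t => ((q t : ℂ))) s t
  exact ContinuousAt.comp_continuousWithinAt
    (Complex.continuousAt_arg (circle_mem_slitPlane (hne t ht))) h1

lemma exists_lift (g : Circle → Circle) (hg : Continuous g) : ∃ ψ, IsLift g ψ := by
  have hπ := Real.pi_pos
  set f : ℝ → Circle := fun t => g (Circle.exp t) with hf
  have hfc : Continuous f := hg.comp Circle.exp.continuous
  obtain ⟨δ, hδ0, hδ⟩ : ∃ δ > 0, ∀ s t : ℝ, s ∈ Icc 0 (2*π) → t ∈ Icc 0 (2*π) →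
      |s - t| ≤ δ → dist (f s) (f t) < 2 := by
    have hK : IsCompact (Icc (0:ℝ) (2*π)) := isCompact_Icc
    have huc : UniformContinuousOn f (Icc 0 (2*π)) :=
      hK.uniformContinuousOn_of_continuous hfc.continuousOn
    replace huc := Metric.uniformContinuousOn_iff.1 huc
    obtain ⟨δ, hδ0, h⟩ := huc 2 (by norm_num)
    refine ⟨δ/2, by positivity, fun s t hs ht hst => h s hs t ht ?_⟩
    rw [Real.dist_eq]; linarith
  obtain ⟨n, hn⟩ := exists_nat_gt (2*π/δ)
  have hn0 : 0 < n := by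
    have : 0 < 2*π/δ := by positivity
    exact_mod_cast this.trans hn
  have hn' : (0:ℝ) < n := by exact_mod_cast hn0
  set h : ℝ := 2*π/n with hh
  have hh0 : 0 < h := div_pos (by positivity) hn'
  have hnh : (n:ℝ) * h = 2*π := by rw [hh]; field_simp
  have hhδ : h ≤ δ := by
    rw [hh, div_le_iff₀ hn']
    rw [div_lt_iff₀ hδ0] at hn
    nlinarith
  have key : ∀ k : ℕ, k ≤ n → ∃ ψ : ℝ → ℝ, ContinuousOn ψ (Icc 0 (k*h)) ∧
      ∀ t ∈ Icc 0 ((k:ℝ)*h), Circle.exp (ψ t) = f t := by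
    intro k
    induction k with
    | zero =>
      intro _
      refine ⟨fun _ => Complex.arg (f 0), continuousOn_const, fun t ht => ?_⟩
      simp only [Nat.cast_zero, zero_mul, Icc_self, mem_singleton_iff] at ht
      rw [ht, Circle.exp_arg]
    | succ k ih =>
      intro hk1
      simp only [Nat.cast_add, Nat.cast_one]
      obtain ⟨ψ, hψc, hψ⟩ := ih (Nat.le_of_succ_le hk1)
      set a : ℝ := k * h with ha
      have ha0 : 0 ≤ a := by positivity
      set b : ℝ := ((k:ℝ)+1) * h with hb
      have hab : a ≤ b := by nlinarith
      have hb2π : b ≤ 2*π := by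
        have hkn : ((k:ℝ)+1) ≤ n := by exact_mod_cast hk1
        calc b = ((k:ℝ)+1) * h := hb
          _ ≤ (n:ℝ) * h := mul_le_mul_of_nonneg_right hkn hh0.le
          _ = 2*π := hnh
      have hclose : ∀ t ∈ Icc 0 b, ((f (max t a) / f a : Circle) : ℂ) ≠ -1 := by
        intro t ht
        have hmem : max t a ∈ Icc 0 (2*π) := by
          constructor
          · exact le_max_of_le_right ha0
          · exact max_le (ht.2.trans hb2π) (by nlinarith)
        have hdist : dist (f (max t a)) (f a) < 2 := by
          apply hδ _ _ hmem ⟨ha0, by nlinarith⟩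
          have h1 : a ≤ max t a := le_max_right _ _
          have h2 : max t a ≤ b := max_le (ht.2) hab
          rw [abs_sub_le_iff]
          constructor <;> nlinarith
        intro hc
        apply circle_ne_neg hdist
        have hfa := Circle.coe_ne_zero (f a)
        rw [Circle.coe_div, div_eq_iff hfa] at hc
        rw [hc]; ring
      refine ⟨fun t => ψ (min t a) + Complex.arg ((f (max t a) / f a : Circle)), ?_, ?_⟩
      · apply ContinuousOn.add
        · apply hψc.comp (continuous_min.comp (continuous_id.prodMk continuous_const)).continuousOn
          intro t ht
          exact ⟨le_min ht.1 ha0, min_le_right _ _⟩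
        · apply continuousOn_arg_comp _ hclose
          apply ContinuousOn.div'
          · exact (hfc.comp (continuous_max.comp
              (continuous_id.prodMk continuous_const))).continuousOn
          · exact continuousOn_const
      · intro t ht
        rw [Circle.exp_add, Circle.exp_arg]
        rcases le_total t a with hta | hta
        · rw [min_eq_left hta, max_eq_right hta, div_self', mul_one]
          exact hψ t ⟨ht.1, hta⟩
        · rw [min_eq_right hta, max_eq_left hta, hψ a ⟨ha0, le_refl a⟩]
          exact mul_div_cancel (f a) (f t)
  obtain ⟨ψ, hc, hl⟩ := key n le_rfl
  exact ⟨ψ, by rwa [hnh] at hc, by rw [← hnh]; exact hl⟩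

lemma exp_injOn_Ico : InjOn Circle.exp (Ico 0 (2 * π)) := by
  intro x hx y hy h
  obtain ⟨m, hm⟩ := Circle.exp_eq_exp.1 h
  have hπ := Real.pi_pos
  have : (m : ℝ) * (2 * π) = x - y := by linarith
  have hm0 : m = 0 := by
    by_contra hm0
    have h1 : (1 : ℝ) ≤ |(m : ℝ)| := by
      exact_mod_cast Int.one_le_abs (by exact_mod_cast fun h => hm0 (by exact_mod_cast h))
    have : |(m : ℝ) * (2 * π)| < 2 * π := by
      rw [this, abs_sub_lt_iff]
      constructor <;> [skip; skip] <;> cases' hx with hx1 hx2 <;> cases' hy with hy1 hy2 <;> linarith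
    rw [abs_mul, abs_of_pos (by positivity : (0:ℝ) < 2 * π)] at this
    nlinarith
  rw [hm0] at hm
  simpa using hm

def HasDeg (g : Circle → Circle) (d : ℤ) : Prop :=
  ∃ ψ, IsLift g ψ ∧ ψ (2 * π) = ψ 0 + d * (2 * π)

/-- two lifts of the same map have the same endpoint difference -/
lemma lift_diff_eq {g : Circle → Circle} {ψ ψ' : ℝ → ℝ} (h : IsLift g ψ) (h' : IsLift g ψ') :
    ψ (2*π) - ψ' (2*π) = ψ 0 - ψ' 0 := by
  have hπ := Real.pi_pos
  set S : Set ℝ := (fun t => ψ t - ψ' t) '' Icc 0 (2*π) with hS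
  have hpre : IsPreconnected S :=
    (isPreconnected_Icc).image _ (h.1.sub h'.1)
  have hmul : ∀ x ∈ S, ∃ m : ℤ, x = m * (2*π) := by
    rintro x ⟨t, ht, rfl⟩
    have := (h.2 t ht).trans (h'.2 t ht).symm
    obtain ⟨m, hm⟩ := Circle.exp_eq_exp.1 this
    refine ⟨m, ?_⟩
    show ψ t - ψ' t = _
    linarith
  have h2 : ψ (2*π) - ψ' (2*π) ∈ S := ⟨2*π, ⟨by positivity, le_refl _⟩, rfl⟩
  have h0 : ψ 0 - ψ' 0 ∈ S := ⟨0, ⟨le_refl _, by positivity⟩, rfl⟩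
  by_contra hne
  obtain ⟨m2, hm2⟩ := hmul _ h2
  obtain ⟨m0, hm0⟩ := hmul _ h0
  -- wlog via both orderings
  have key : ∀ x y : ℝ, x ∈ S → y ∈ S → (∃ mx : ℤ, x = mx * (2*π)) → x < y → False := by
    intro x y hx hy ⟨mx, hmx⟩ hlt
    have hmem : x + π ∈ S := hpre.Icc_subset hx hy ⟨by linarith, ?_⟩
    · obtain ⟨m, hm⟩ := hmul _ hmem
      rw [hmx] at hm
      have : (2 * (m - mx) : ℝ) = 1 := by push_cast; nlinarith [Real.pi_ne_zero]
      have : (2 * (m - mx) : ℤ) = 1 := by exact_mod_cast this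
      omega
    · -- x + π ≤ y : since y is also a multiple and y > x, y ≥ x + 2π
      obtain ⟨my, hmy⟩ := hmul _ hy
      have hxy : (mx : ℝ) < my := by
        by_contra hc
        push_neg at hc
        have : (my:ℝ) * (2*π) ≤ mx * (2*π) := by nlinarith
        rw [← hmx, ← hmy] at this; linarith
      have : (mx : ℤ) + 1 ≤ my := by exact_mod_cast Int.lt_iff_add_one_le.1 (by exact_mod_cast hxy)
      have : ((mx : ℝ) + 1) ≤ my := by exact_mod_cast this
      rw [hmx, hmy]; nlinarith
  rcases lt_trichotomy (ψ (2*π) - ψ' (2*π)) (ψ 0 - ψ' 0) with hlt | heq | hlt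
  · exact key _ _ h2 h0 ⟨m2, hm2⟩ hlt
  · exact hne heq
  · exact key _ _ h0 h2 ⟨m0, hm0⟩ hlt

lemma hasDeg_unique {g : Circle → Circle} {d d' : ℤ} (h : HasDeg g d) (h' : HasDeg g d') :
    d = d' := by
  obtain ⟨ψ, hψ, he⟩ := h
  obtain ⟨ψ', hψ', he'⟩ := h'
  have := lift_diff_eq hψ hψ'
  have hπ := Real.pi_pos
  have : (d : ℝ) * (2*π) = d' * (2*π) := by linarith
  have h2π : (2*π : ℝ) ≠ 0 := by positivity
  have := mul_right_cancel₀ h2π this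
  exact_mod_cast this

lemma hasDeg_close {g₁ g₂ : Circle → Circle} (hg₁ : Continuous g₁) (hg₂ : Continuous g₂)
    (hne : ∀ z : Circle, dist (g₁ z) (g₂ z) < 2) {d : ℤ} (h : HasDeg g₁ d) : HasDeg g₂ d := by
  obtain ⟨ψ, ⟨hψc, hψ⟩, he⟩ := h
  set q : Circle → Circle := fun z => g₂ z / g₁ z with hq
  have hqne : ∀ z : Circle, ((q z : ℂ) ≠ -1) := by
    intro z hc
    apply circle_ne_neg (hne z)
    have h0 := Circle.coe_ne_zero (g₁ z)
    rw [hq] at hc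
    simp only [Circle.coe_div, div_eq_iff h0] at hc
    rw [hc]; ring
  refine ⟨fun t => ψ t + Complex.arg (q (Circle.exp t)), ⟨?_, ?_⟩, ?_⟩
  · apply hψc.add
    apply continuousOn_arg_comp _ (fun t _ => hqne (Circle.exp t))
    exact ((hg₂.div' hg₁).comp Circle.exp.continuous).continuousOn
  · intro t ht
    rw [Circle.exp_add, Circle.exp_arg, hψ t ht, hq]
    exact mul_div_cancel _ _
  · have : Circle.exp (2*π) = Circle.exp 0 := by
      rw [Circle.exp_two_pi, Circle.exp_zero]
    show ψ (2*π) + Complex.arg (q (Circle.exp (2*π))) = ψ 0 + Complex.arg (q (Circle.exp 0)) + d*(2*π)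
    rw [this, he]; ring

lemma hasDeg_congr {g₁ g₂ : Circle → Circle} (h : ∀ z, g₁ z = g₂ z) {d : ℤ}
    (hd : HasDeg g₁ d) : HasDeg g₂ d := by
  have : g₁ = g₂ := funext h
  rwa [← this]

lemma hasDeg_homotopic {g₁ g₂ : C(Circle, Circle)} (h : g₁.Homotopic g₂) {d : ℤ}
    (hd : HasDeg g₁ d) : HasDeg g₂ d := by
  obtain ⟨H⟩ := h
  obtain ⟨δ, hδ0, hδ⟩ : ∃ δ > 0, ∀ (p q : unitInterval × Circle), dist p q < δ →
      dist (H p) (H q) < 2 := by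
    have := CompactSpace.uniformContinuous_of_continuous H.continuous
    replace this := Metric.uniformContinuous_iff.1 this
    obtain ⟨δ, hδ0, h⟩ := this 2 (by norm_num)
    exact ⟨δ, hδ0, fun p q hpq => h hpq⟩
  set S : Set unitInterval := {s | HasDeg (fun z => H (s, z)) d} with hS
  have hslice : ∀ s : unitInterval, Continuous (fun z => H (s, z)) :=
    fun s => H.continuous.comp (continuous_const.prodMk continuous_id)
  have hstep : ∀ s s' : unitInterval, dist s s' < δ → s ∈ S → s' ∈ S := by
    intro s s' hss hs
    refine hasDeg_close (hslice s) (hslice s') (fun z => ?_) hs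
    apply hδ (s, z) (s', z)
    rw [Prod.dist_eq]
    simp [hss, hδ0]
  have hclopen : IsClopen S := by
    constructor
    · rw [← isOpen_compl_iff]
      rw [Metric.isOpen_iff]
      intro s hs
      refine ⟨δ, hδ0, fun s' hs' hmem => hs ?_⟩
      exact hstep s' s (by rwa [Metric.mem_ball] at hs') hmem
    · rw [Metric.isOpen_iff]
      intro s hs
      exact ⟨δ, hδ0, fun s' hs' => hstep s s' (by rwa [Metric.mem_ball, dist_comm] at hs') hs⟩
  have h0 : (0 : unitInterval) ∈ S := by
    refine hasDeg_congr (fun z => ?_) hd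
    exact (H.apply_zero z).symm
  have := hclopen.eq_univ ⟨0, h0⟩
  have h1 : (1 : unitInterval) ∈ S := this ▸ mem_univ _
  exact hasDeg_congr (fun z => H.apply_one z) h1

lemma exp_zsmul' (d : ℤ) (t : ℝ) : Circle.exp (d * t) = Circle.exp t ^ d := by
  have := map_zsmul Circle.expHom d t
  simpa [zsmul_eq_mul] using this

lemma hasDeg_pow (d : ℤ) : HasDeg (fun z : Circle => z ^ d) d := by
  refine ⟨fun t => d * t, ⟨(continuous_const.mul continuous_id).continuousOn, fun t _ => ?_⟩, by ring⟩
  exact exp_zsmul' d t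

lemma hasDeg_div {g₁ g₂ : Circle → Circle} {d₁ d₂ : ℤ} (h₁ : HasDeg g₁ d₁) (h₂ : HasDeg g₂ d₂) :
    HasDeg (fun z => g₁ z / g₂ z) (d₁ - d₂) := by
  obtain ⟨ψ₁, ⟨hc₁, hl₁⟩, he₁⟩ := h₁
  obtain ⟨ψ₂, ⟨hc₂, hl₂⟩, he₂⟩ := h₂
  refine ⟨fun t => ψ₁ t - ψ₂ t, ⟨hc₁.sub hc₂, fun t ht => ?_⟩, by push_cast; linarith⟩
  rw [Circle.exp_sub, hl₁ t ht, hl₂ t ht]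

/-- the key counting lower bound -/
lemma card_ge {g : Circle → Circle} {d : ℤ} (hdeg : HasDeg g d) (hd0 : d ≠ 0) :
    (d.natAbs : ℕ∞) ≤ {z : Circle | g z = 1}.encard := by
  have hπ := Real.pi_pos
  obtain ⟨ψ, ⟨hψc, hψ⟩, he⟩ := hdeg
  set n := d.natAbs with hn
  -- find for each j a point t_j ∈ [0, 2π) with ψ t_j = (appropriate multiple of 2π)
  have key : ∀ j : Fin n, ∃ t ∈ Ico 0 (2*π), ∃ m : ℤ, ψ t = m * (2*π) ∧
      m = (if 0 < d then ⌈ψ 0 / (2*π)⌉ + j else ⌊ψ 0 / (2*π)⌋ - j) := by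
    intro j
    have hj : (j : ℕ) < n := j.2
    rcases lt_or_gt_of_ne hd0 with hdneg | hdpos
    · -- d < 0 : values 2π(⌊ψ0/2π⌋ − j) ∈ (ψ(2π), ψ 0]
      set c : ℤ := ⌊ψ 0 / (2*π)⌋ with hc
      set v : ℝ := (c - (j:ℤ)) * (2*π) with hv
      have h1 : v ≤ ψ 0 := by
        have h0 : (c:ℝ) ≤ ψ 0 / (2*π) := Int.floor_le _
        have : (c:ℝ) - j ≤ ψ 0 / (2*π) := by
          have : (0:ℝ) ≤ j := by positivity
          linarith
        rw [hv, ← le_div_iff₀ (by positivity)]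
        exact_mod_cast this
      have h2 : ψ (2*π) < v := by
        have h0 : ψ 0 / (2*π) < c + 1 := Int.lt_floor_add_one _
        have hjd : (j:ℝ) ≤ -d - 1 := by
          have : (j:ℤ) ≤ -d - 1 := by omega
          exact_mod_cast this
        have : ψ 0 < (c + 1) * (2*π) := by
          rw [← div_lt_iff₀ (by positivity)] at *
          exact_mod_cast h0
        have hvlb : ((c:ℝ) - j) * (2*π) ≥ (c + 1 + d) * (2*π) := by nlinarith
        rw [he, hv]
        push_cast
        nlinarith
      have hsub : Icc (ψ (2*π)) (ψ 0) ⊆ ψ '' Icc 0 (2*π) :=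
        intermediate_value_Icc' (by positivity) hψc
      obtain ⟨t, ht, hts⟩ := hsub ⟨h2.le, h1⟩
      refine ⟨t, ⟨ht.1, lt_of_le_of_ne ht.2 fun hteq => ?_⟩, c - j, by rw [hts, hv]; push_cast; ring, by simp [if_neg (not_lt.2 hdneg.le), hc]⟩
      rw [hteq] at hts
      rw [hts] at h2
      exact lt_irrefl _ h2
    · -- d > 0 : values 2π(⌈ψ0/2π⌉ + j) ∈ [ψ 0, ψ(2π))
      set c : ℤ := ⌈ψ 0 / (2*π)⌉ with hc
      set v : ℝ := (c + (j:ℤ)) * (2*π) with hv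
      have h1 : ψ 0 ≤ v := by
        have h0 : ψ 0 / (2*π) ≤ (c:ℝ) := Int.le_ceil _
        have : ψ 0 / (2*π) ≤ (c:ℝ) + j := by
          have : (0:ℝ) ≤ j := by positivity
          linarith
        rw [hv, ← div_le_iff₀ (by positivity)]
        exact_mod_cast this
      have h2 : v < ψ (2*π) := by
        have h0 : (c:ℝ) < ψ 0 / (2*π) + 1 := Int.ceil_lt_add_one _
        have hjd : (j:ℝ) ≤ d - 1 := by
          have : (j:ℤ) ≤ d - 1 := by omega
          exact_mod_cast this
        have : (c:ℝ) * (2*π) < ψ 0 + 2*π := by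
          have := mul_lt_mul_of_pos_right h0 (by positivity : (0:ℝ) < 2*π)
          calc (c:ℝ) * (2*π) < (ψ 0 / (2*π) + 1) * (2*π) := this
            _ = ψ 0 + 2*π := by field_simp
        rw [he, hv]
        push_cast
        nlinarith
      have hsub : Icc (ψ 0) (ψ (2*π)) ⊆ ψ '' Icc 0 (2*π) :=
        intermediate_value_Icc (by positivity) hψc
      obtain ⟨t, ht, hts⟩ := hsub ⟨h1, h2.le⟩
      refine ⟨t, ⟨ht.1, lt_of_le_of_ne ht.2 fun hteq => ?_⟩, c + j, by rw [hts, hv]; push_cast; ring, by simp [if_pos hdpos, hc]⟩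
      rw [hteq] at hts
      rw [hts] at h2
      exact lt_irrefl _ h2
  choose T hT M hM hMval using key
  set E : Fin n → Circle := fun j => Circle.exp (T j) with hE
  have hEmem : ∀ j, E j ∈ {z : Circle | g z = 1} := by
    intro j
    have h1 : Circle.exp (ψ (T j)) = g (Circle.exp (T j)) :=
      hψ (T j) ⟨(hT j).1, (hT j).2.le⟩
    have h2 : Circle.exp (ψ (T j)) = 1 := by
      rw [hM j]
      exact Circle.exp_int_mul_two_pi (M j)
    exact (h1.symm.trans h2)
  have hEinj : Function.Injective E := by
    intro i j hij
    have := exp_injOn_Ico (hT i) (hT j) hij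
    have hMij : M i = M j := by
      have hi := hM i
      have hj := hM j
      rw [this] at hi
      rw [hi] at hj
      have : (M i : ℝ) = M j := by
        have h2π : (2*π : ℝ) ≠ 0 := by positivity
        exact (mul_right_cancel₀ h2π hj.symm).symm
      exact_mod_cast this
    have := (hMval i).symm.trans (hMij ▸ hMval j)
    rcases lt_or_ge 0 d with hd | hd
    · rw [if_pos hd, if_pos hd] at this
      have : (i : ℤ) = j := by omega
      exact Fin.ext (by exact_mod_cast this)
    · rw [if_neg (not_lt.2 hd), if_neg (not_lt.2 hd)] at this
      have : (i : ℤ) = j := by omega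
      exact Fin.ext (by exact_mod_cast this)
  calc (n : ℕ∞) = (univ : Set (Fin n)).encard := by
        rw [Set.encard_univ]; simp
    _ = (E '' univ).encard := (hEinj.encard_image _).symm
    _ ≤ {z : Circle | g z = 1}.encard :=
        Set.encard_le_encard (by rintro _ ⟨j, _, rfl⟩; exact hEmem j)

lemma circle_pow_card {m : ℕ} (hm : m ≠ 0) :
    {z : Circle | z ^ m = 1}.encard = m := by
  have himg : (fun z : Circle => (z : ℂ)) '' {z : Circle | z ^ m = 1} = {w : ℂ | w ^ m = 1} := by
    ext w
    constructor
    · rintro ⟨z, hz, rfl⟩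
      have hz' : z ^ m = 1 := hz
      have : ((z ^ m : Circle) : ℂ) = ((1 : Circle) : ℂ) := by rw [hz']
      show (z : ℂ) ^ m = 1
      push_cast at this
      exact this
    · intro hw
      have habs : ‖w‖ = 1 := by
        have h1 : ‖w‖ ^ m = 1 := by
          rw [← norm_pow, hw, norm_one]
        have h0 : 0 ≤ ‖w‖ := norm_nonneg _
        rcases lt_trichotomy ‖w‖ 1 with h | h | h
        · exfalso; have := pow_lt_one₀ h0 h hm; linarith
        · exact h
        · exfalso; have := one_lt_pow₀ h hm; linarith
      refine ⟨⟨w, mem_sphere_zero_iff_norm.2 (by exact habs)⟩, ?_, rfl⟩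
      show (⟨w, _⟩ : Circle) ^ m = 1
      apply Circle.coe_injective
      push_cast
      exact hw
  have h2 : {w : ℂ | w ^ m = 1} = ↑(Polynomial.nthRootsFinset m (1:ℂ)) := by
    ext w
    rw [Finset.mem_coe, Polynomial.mem_nthRootsFinset (Nat.pos_of_ne_zero hm)]
    rfl
  calc {z : Circle | z ^ m = 1}.encard
      = ((fun z : Circle => (z : ℂ)) '' {z : Circle | z ^ m = 1}).encard :=
        (Circle.coe_injective.encard_image _).symm
    _ = ({w : ℂ | w ^ m = 1}).encard := by rw [himg]
    _ = (↑(Polynomial.nthRootsFinset m (1:ℂ)) : Set ℂ).encard := by rw [h2]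
    _ = (Polynomial.nthRootsFinset m (1:ℂ)).card := Set.encard_coe_eq_coe_finsetCard _
    _ = m := by rw [(Complex.isPrimitiveRoot_exp m hm).card_nthRootsFinset]

lemma circle_zpow_card {d : ℤ} (hd : d ≠ 0) :
    {z : Circle | z ^ d = 1}.encard = d.natAbs := by
  have : {z : Circle | z ^ d = 1} = {z : Circle | z ^ d.natAbs = 1} := by
    ext z
    simp only [mem_setOf_eq]
    rw [← zpow_natCast z d.natAbs]
    rcases Int.natAbs_eq d with h | h
    · rw [← h]
    · rw [show ((d.natAbs : ℤ)) = -d from by omega, zpow_neg, inv_eq_one]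
  rw [this, circle_pow_card (Int.natAbs_ne_zero.2 hd)]



/-- If `f₁ f₂ : S¹ → S¹` have degrees `d₁ ≠ d₂` (i.e. are homotopic to `z ↦ z^dᵢ`),
then every pair homotopic to `(f₁, f₂)` has at least `|d₁ - d₂|` coincidence points,
and this bound is attained: the minimal number of coincidence points equals `|d₁ - d₂|`. -/
theorem stmt_1 (d₁ d₂ : ℤ) (hd : d₁ ≠ d₂) (f₁ f₂ : C(Circle, Circle))
    (h₁ : f₁.Homotopic ⟨fun z => z ^ d₁, continuous_zpow d₁⟩)
    (h₂ : f₂.Homotopic ⟨fun z => z ^ d₂, continuous_zpow d₂⟩) :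
    (∀ g₁ g₂ : C(Circle, Circle), f₁.Homotopic g₁ → f₂.Homotopic g₂ →
      ((d₁ - d₂).natAbs : ℕ∞) ≤ {z : Circle | g₁ z = g₂ z}.encard) ∧
    sInf {c : ℕ∞ | ∃ g₁ g₂ : C(Circle, Circle), f₁.Homotopic g₁ ∧ f₂.Homotopic g₂ ∧
        c = {z : Circle | g₁ z = g₂ z}.encard} = ((d₁ - d₂).natAbs : ℕ∞) := by
  have hd0 : d₁ - d₂ ≠ 0 := sub_ne_zero.mpr hd
  have main : ∀ g₁ g₂ : C(Circle, Circle), f₁.Homotopic g₁ → f₂.Homotopic g₂ →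
      ((d₁ - d₂).natAbs : ℕ∞) ≤ {z : Circle | g₁ z = g₂ z}.encard := by
    intro g₁ g₂ hg₁ hg₂
    have hdeg₁ : HasDeg (⇑g₁) d₁ :=
      hasDeg_homotopic (h₁.symm.trans hg₁)
        (hasDeg_congr (g₁ := fun z : Circle => z ^ d₁) (fun z => rfl) (hasDeg_pow d₁))
    have hdeg₂ : HasDeg (⇑g₂) d₂ :=
      hasDeg_homotopic (h₂.symm.trans hg₂)
        (hasDeg_congr (g₁ := fun z : Circle => z ^ d₂) (fun z => rfl) (hasDeg_pow d₂))
    have hdiv : HasDeg (fun z => g₁ z / g₂ z) (d₁ - d₂) := hasDeg_div hdeg₁ hdeg₂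
    have hset : {z : Circle | g₁ z = g₂ z} = {z : Circle | (fun z => g₁ z / g₂ z) z = 1} := by
      ext z
      simp only [Set.mem_setOf_eq, div_eq_one]
    rw [hset]
    exact card_ge hdiv hd0
  refine ⟨main, le_antisymm ?_ ?_⟩
  · apply sInf_le
    refine ⟨⟨fun z => z ^ d₁, continuous_zpow d₁⟩, ⟨fun z => z ^ d₂, continuous_zpow d₂⟩,
      h₁, h₂, ?_⟩
    have hset : {z : Circle | z ^ d₁ = z ^ d₂} = {z : Circle | z ^ (d₁ - d₂) = 1} := by
      ext z
      simp only [Set.mem_setOf_eq, zpow_sub, div_eq_one, mul_inv_eq_one]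
    show ((d₁ - d₂).natAbs : ℕ∞) = {z : Circle | z ^ d₁ = z ^ d₂}.encard
    rw [hset, circle_zpow_card hd0]
  · apply le_sInf
    rintro c ⟨g₁, g₂, hg₁, hg₂, rfl⟩
    exact main g₁ g₂ hg₁ hg₂

end CircleDegreeTheory
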